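/- Over the unary alphabet Σ = {a}, for every C-RASP program P (with no positional relations) there exists n ∈ ℕ such that for all words w with |w| ≥ n, either P accepts all such w or P rejects all such w. -/

import Mathlib

mutual
/-- Syntax of C-RASP programs without positional relations: Boolean-valued
operations. A program (a sequence of operations, each possibly referring to
earlier ones) is represented by the expression tree of its final
Boolean-valued operation. -/
inductive BExpr (α : Type) : Type
  | tok : α → BExpr α                      -- initial operation `Q_σ(i)`
  | not : BExpr α → BExpr α                -- Boolean negation
  | and : BExpr α → BExpr α → BExpr α      -- Boolean conjunction
  | top : BExpr α                          -- constant ⊤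
  | le  : CExpr α → CExpr α → BExpr α      -- comparison `C₁(i) ≤ C₂(i)`
/-- Count-valued C-RASP operations. -/
inductive CExpr (α : Type) : Type
  | count : BExpr α → CExpr α              -- `#{j ≤ i : P(j)}`
  | cond  : BExpr α → CExpr α → CExpr α → CExpr α  -- conditional
  | add : CExpr α → CExpr α → CExpr α      -- addition
  | sub : CExpr α → CExpr α → CExpr α      -- subtraction
  | one : CExpr α                          -- constant 1
end

mutual
/-- Evaluation of a Boolean-valued C-RASP operation on word `w` at
(0-based) position `i`. -/
def BExpr.eval {α : Type} [DecidableEq α] (w : List α) : BExpr α → ℕ → Bool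
  | .tok σ, i => decide (w[i]? = some σ)
  | .not b, i => ! b.eval w i
  | .and b₁ b₂, i => b₁.eval w i && b₂.eval w i
  | .top, _ => true
  | .le c₁ c₂, i => decide (c₁.eval w i ≤ c₂.eval w i)
/-- Evaluation of a count-valued C-RASP operation on word `w` at position `i`. -/
def CExpr.eval {α : Type} [DecidableEq α] (w : List α) : CExpr α → ℕ → ℤ
  | .count b, i => ((List.range (i + 1)).countP (fun j => b.eval w j) : ℤ)
  | .cond b c₁ c₂, i => if b.eval w i then c₁.eval w i else c₂.eval w i
  | .add c₁ c₂, i => c₁.eval w i + c₂.eval w i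
  | .sub c₁ c₂, i => c₁.eval w i - c₂.eval w i
  | .one, _ => 1
end

/-- A C-RASP program accepts a word iff its final Boolean-valued operation is
true at the last position of the word. -/
def BExpr.accepts {α : Type} [DecidableEq α] (P : BExpr α) (w : List α) : Prop :=
  P.eval w (w.length - 1) = true

-- auxiliary
def rep (m : ℕ) : List Unit := List.replicate m ()

mutual
theorem bInv (e : BExpr Unit) : ∀ (i m m' : ℕ), i < m → i < m' →
    e.eval (rep m) i = e.eval (rep m') i := by
  intro i m m' h h'
  cases e with
  | tok σ =>
    simp [BExpr.eval, rep, List.getElem?_replicate, h, h']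
  | not b => simp [BExpr.eval, bInv b i m m' h h']
  | and b₁ b₂ => simp [BExpr.eval, bInv b₁ i m m' h h', bInv b₂ i m m' h h']
  | top => rfl
  | le c₁ c₂ => simp [BExpr.eval, cInv c₁ i m m' h h', cInv c₂ i m m' h h']
theorem cInv (c : CExpr Unit) : ∀ (i m m' : ℕ), i < m → i < m' →
    c.eval (rep m) i = c.eval (rep m') i := by
  intro i m m' h h'
  cases c with
  | count b =>
    simp only [CExpr.eval]
    congr 1
    apply List.countP_congr
    intro j hj
    have hj' : j < i + 1 := List.mem_range.mp hj
    simp [bInv b j m m' (by omega) (by omega)]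
  | cond b c₁ c₂ =>
    simp only [CExpr.eval, bInv b i m m' h h', cInv c₁ i m m' h h',
      cInv c₂ i m m' h h']
  | add c₁ c₂ => simp only [CExpr.eval, cInv c₁ i m m' h h', cInv c₂ i m m' h h']
  | sub c₁ c₂ => simp only [CExpr.eval, cInv c₁ i m m' h h', cInv c₂ i m m' h h']
  | one => rfl
end

def F (e : BExpr Unit) (i : ℕ) : Bool := e.eval (rep (i + 1)) i
def G (c : CExpr Unit) (i : ℕ) : ℤ := c.eval (rep (i + 1)) i

theorem linCmp (a₁ b₁ a₂ b₂ : ℤ) : ∃ (n : ℕ) (v : Bool), ∀ i : ℕ, n ≤ i →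
    decide (a₁ * i + b₁ ≤ a₂ * i + b₂) = v := by
  rcases lt_trichotomy a₁ a₂ with h | h | h
  · refine ⟨(b₁ - b₂).toNat, true, fun i hi => ?_⟩
    have h1 : (1 : ℤ) ≤ a₂ - a₁ := by omega
    have h2 : (b₁ - b₂ : ℤ) ≤ (i : ℤ) := by
      have := Int.self_le_toNat (b₁ - b₂)
      have : ((b₁ - b₂).toNat : ℤ) ≤ (i : ℤ) := by exact_mod_cast hi
      omega
    have h3 : (0 : ℤ) ≤ (i : ℤ) := Int.ofNat_nonneg i
    simp only [decide_eq_true_iff]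
    nlinarith
  · subst h
    exact ⟨0, decide (b₁ ≤ b₂), fun i _ => by simp⟩
  · refine ⟨(b₂ - b₁).toNat + 1, false, fun i hi => ?_⟩
    have h1 : (1 : ℤ) ≤ a₁ - a₂ := by omega
    have h2 : (b₂ - b₁ : ℤ) < (i : ℤ) := by
      have := Int.self_le_toNat (b₂ - b₁)
      have : ((b₂ - b₁).toNat : ℤ) + 1 ≤ (i : ℤ) := by exact_mod_cast hi
      omega
    have h3 : (0 : ℤ) ≤ (i : ℤ) := Int.ofNat_nonneg i
    simp only [decide_eq_false_iff_not, not_le]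
    nlinarith

theorem countLin (f : ℕ → Bool) (n : ℕ) (v : Bool) (hv : ∀ i, n ≤ i → f i = v) :
    ∀ k : ℕ, (List.range (n + k + 1)).countP f
      = (List.range (n + 1)).countP f + (if v then k else 0) := by
  intro k
  induction k with
  | zero => simp
  | succ k ih =>
    have : n + (k + 1) + 1 = (n + k + 1) + 1 := by omega
    rw [this, List.range_succ, List.countP_append, ih]
    have hf : f (n + k + 1) = v := hv _ (by omega)
    cases v <;> simp [List.countP, List.countP.go, hf] <;> omega

mutual
theorem bEvent (e : BExpr Unit) : ∃ (n : ℕ) (v : Bool), ∀ i, n ≤ i → F e i = v := by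
  cases e with
  | tok σ =>
    refine ⟨0, true, fun i _ => ?_⟩
    simp [F, BExpr.eval, rep, List.getElem?_replicate]
  | not b =>
    obtain ⟨n, v, hv⟩ := bEvent b
    refine ⟨n, !v, fun i hi => ?_⟩
    simp only [F, BExpr.eval]
    rw [show BExpr.eval (rep (i+1)) b i = v from hv i hi]
  | and b₁ b₂ =>
    obtain ⟨n₁, v₁, h₁⟩ := bEvent b₁
    obtain ⟨n₂, v₂, h₂⟩ := bEvent b₂
    refine ⟨max n₁ n₂, v₁ && v₂, fun i hi => ?_⟩
    have e1 := h₁ i (le_trans (le_max_left _ _) hi)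
    have e2 := h₂ i (le_trans (le_max_right _ _) hi)
    simp only [F, BExpr.eval] at *
    rw [e1, e2]
  | top => exact ⟨0, true, fun i _ => rfl⟩
  | le c₁ c₂ =>
    obtain ⟨n₁, a₁, b₁, h₁⟩ := cEvent c₁
    obtain ⟨n₂, a₂, b₂, h₂⟩ := cEvent c₂
    obtain ⟨n₃, v, h₃⟩ := linCmp a₁ b₁ a₂ b₂
    refine ⟨max n₃ (max n₁ n₂), v, fun i hi => ?_⟩
    have e1 := h₁ i (by omega)
    have e2 := h₂ i (by omega)
    have e3 := h₃ i (by omega)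
    simp only [F, BExpr.eval] at *
    rw [show (CExpr.eval (rep (i+1)) c₁ i) = G c₁ i from rfl,
      show (CExpr.eval (rep (i+1)) c₂ i) = G c₂ i from rfl, e1, e2, e3]
theorem cEvent (c : CExpr Unit) : ∃ (n : ℕ) (a b : ℤ), ∀ i, n ≤ i →
    G c i = a * i + b := by
  cases c with
  | count b =>
    obtain ⟨n, v, hv⟩ := bEvent b
    have key : ∀ i, n ≤ i → G (.count b) i
        = ((List.range (n + 1)).countP (F b) + (if v then (i - n : ℕ) else 0) : ℕ) := by
      intro i hi
      have hFb : ∀ j, j ≤ i → (b.eval (rep (i + 1)) j) = F b j := by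
        intro j hj
        exact bInv b j (i + 1) (j + 1) (by omega) (by omega)
      have h0 : G (.count b) i = ((List.range (i + 1)).countP (F b) : ℤ) := by
        simp only [G, CExpr.eval]
        congr 1
        apply List.countP_congr
        intro j hj
        have := List.mem_range.mp hj
        simp [hFb j (by omega)]
      rw [h0, show i = n + (i - n) by omega, countLin (F b) n v hv (i - n)]
      push_cast
      ring_nf
      norm_num
    refine ⟨n, (if v then 1 else 0), ((List.range (n + 1)).countP (F b) : ℤ)
      + (if v then -(n : ℤ) else 0), fun i hi => ?_⟩
    rw [key i hi]
    have : ((i : ℤ) - (n : ℤ)) = ((i - n : ℕ) : ℤ) := by omega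
    cases v <;> simp only [if_true, if_false, Bool.false_eq_true] <;> push_cast <;> omega
  | cond b c₁ c₂ =>
    obtain ⟨n, v, hv⟩ := bEvent b
    obtain ⟨n₁, a₁, b₁, h₁⟩ := cEvent c₁
    obtain ⟨n₂, a₂, b₂, h₂⟩ := cEvent c₂
    refine ⟨max n (max n₁ n₂), if v then a₁ else a₂, if v then b₁ else b₂,
      fun i hi => ?_⟩
    have e0 : b.eval (rep (i + 1)) i = v := hv i (by omega)
    have e1 := h₁ i (by omega)
    have e2 := h₂ i (by omega)
    simp only [G, CExpr.eval] at *
    rw [e0]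
    cases v <;> simp [e1, e2]
  | add c₁ c₂ =>
    obtain ⟨n₁, a₁, b₁, h₁⟩ := cEvent c₁
    obtain ⟨n₂, a₂, b₂, h₂⟩ := cEvent c₂
    refine ⟨max n₁ n₂, a₁ + a₂, b₁ + b₂, fun i hi => ?_⟩
    have e1 := h₁ i (by omega)
    have e2 := h₂ i (by omega)
    simp only [G, CExpr.eval] at *
    rw [e1, e2]; ring
  | sub c₁ c₂ =>
    obtain ⟨n₁, a₁, b₁, h₁⟩ := cEvent c₁
    obtain ⟨n₂, a₂, b₂, h₂⟩ := cEvent c₂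
    refine ⟨max n₁ n₂, a₁ - a₂, b₁ - b₂, fun i hi => ?_⟩
    have e1 := h₁ i (by omega)
    have e2 := h₂ i (by omega)
    simp only [G, CExpr.eval] at *
    rw [e1, e2]; ring
  | one => exact ⟨0, 0, 1, fun i _ => by simp [G, CExpr.eval]⟩
end

/-- Over the unary alphabet, every C-RASP program (with no positional
relations) eventually gives a constant answer: there is `n` such that it
either accepts all words of length `≥ n` or rejects all of them. -/
theorem stmt11 (P : BExpr Unit) :
    ∃ n : ℕ,
      (∀ m : ℕ, n ≤ m → P.accepts (List.replicate m ())) ∨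
      (∀ m : ℕ, n ≤ m → ¬ P.accepts (List.replicate m ())) := by
  obtain ⟨n, v, hv⟩ := bEvent P
  have key : ∀ m : ℕ, n + 1 ≤ m → (P.accepts (List.replicate m ()) ↔ v = true) := by
    intro m hm
    unfold BExpr.accepts
    rw [List.length_replicate]
    have h1 : P.eval (List.replicate m ()) (m - 1) = F P (m - 1) :=
      bInv P (m - 1) m (m - 1 + 1) (by omega) (by omega)
    rw [h1, hv (m - 1) (by omega)]
  refine ⟨n + 1, ?_⟩
  cases v with
  | true => exact Or.inl fun m hm => (key m hm).mpr rfl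
  | false => exact Or.inr fun m hm => by simp [key m hm]
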